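/- Fix integers n, m ≥ 1 and constants 0 ≤ δ̄ < ḡ. Let g be a real n×m matrix with λ_min(g·gᵀ) ≥ ḡ², and let δ be a real n×m matrix with induced 2-norm ‖δ‖ ≤ δ̄. Let x̃ ∈ ℝ^n with x̃ ≠ 0, let κ ≥ 0 be a real number, set u = −(gᵀx̃/‖gᵀx̃‖)·(ḡ/(ḡ−δ̄))·κ, and let F ∈ ℝ^n, w ∈ ℝ^m. Then ⟨x̃/‖x̃‖, F + (g+δ)(u+w)⟩ ≤ (‖gᵀx̃‖/‖x̃‖)·( −κ + ((ḡ+δ̄)/ḡ)·‖w‖ + ‖F‖/ḡ ). -/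

import Mathlib

open scoped RealInnerProductSpace

/-- The pointwise dissipation inequality (64) in the proof of Proposition 3 of the
paper, along the tracking-error dynamics `D⁺xt = F + (g+δ)(u+w)` with the explicit
tracking control law `u = −(gᵀxt/‖gᵀxt‖)·(ḡ/(ḡ−δ̄))·κ`. The eigenvalue condition
`λ_min(g gᵀ) ≥ ḡ²` is encoded by its equivalent form `‖gᵀ p‖ ≥ ḡ ‖p‖`. -/
theorem stmt15 (n m : ℕ) (hn : 1 ≤ n) (hm : 1 ≤ m)
    (gbar δbar : ℝ) (hδ0 : 0 ≤ δbar) (hδg : δbar < gbar)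
    (g δ : EuclideanSpace ℝ (Fin m) →L[ℝ] EuclideanSpace ℝ (Fin n))
    (hgmin : ∀ p : EuclideanSpace ℝ (Fin n),
      gbar * ‖p‖ ≤ ‖ContinuousLinearMap.adjoint g p‖)
    (hδnorm : ‖δ‖ ≤ δbar)
    (xt : EuclideanSpace ℝ (Fin n)) (hxt : xt ≠ 0)
    (κ : ℝ) (hκ : 0 ≤ κ)
    (u : EuclideanSpace ℝ (Fin m))
    (hu : u = -((gbar / (gbar - δbar)) * κ) •
      ((‖ContinuousLinearMap.adjoint g xt‖)⁻¹ • ContinuousLinearMap.adjoint g xt))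
    (F : EuclideanSpace ℝ (Fin n)) (w : EuclideanSpace ℝ (Fin m)) :
    ⟪(‖xt‖)⁻¹ • xt, F + (g + δ) (u + w)⟫
      ≤ ‖ContinuousLinearMap.adjoint g xt‖ / ‖xt‖ *
        (-κ + (gbar + δbar) / gbar * ‖w‖ + ‖F‖ / gbar) := by
  have hg0 : 0 < gbar := lt_of_le_of_lt hδ0 hδg
  have hgd : 0 < gbar - δbar := sub_pos.mpr hδg
  have hx : 0 < ‖xt‖ := norm_pos_iff.mpr hxt
  set A := ContinuousLinearMap.adjoint g xt with hA
  have hAx : gbar * ‖xt‖ ≤ ‖A‖ := hgmin xt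
  have hA0 : 0 < ‖A‖ := lt_of_lt_of_le (by positivity) hAx
  set c := gbar / (gbar - δbar) with hc
  have hc0 : 0 ≤ c := by positivity
  -- inner products with adjoint
  have hadj : ∀ v : EuclideanSpace ℝ (Fin m), ⟪xt, g v⟫ = ⟪A, v⟫ := fun v =>
    (ContinuousLinearMap.adjoint_inner_left g v xt).symm
  have hAu : ⟪A, u⟫ = -(c * κ) * ‖A‖ := by
    rw [hu, real_inner_smul_right, real_inner_smul_right, real_inner_self_eq_norm_sq]
    field_simp
  have hunorm : ‖u‖ = c * κ := by
    rw [hu, norm_smul, norm_smul, norm_inv, norm_norm, Real.norm_eq_abs,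
      abs_neg, abs_of_nonneg (by positivity)]
    field_simp
  -- bounds for δ terms
  have hδv : ∀ v : EuclideanSpace ℝ (Fin m), ⟪xt, δ v⟫ ≤ ‖xt‖ * (δbar * ‖v‖) := by
    intro v
    calc ⟪xt, δ v⟫ ≤ ‖xt‖ * ‖δ v‖ := real_inner_le_norm _ _
      _ ≤ ‖xt‖ * (δbar * ‖v‖) := by
        have h1 : ‖δ v‖ ≤ ‖δ‖ * ‖v‖ := δ.le_opNorm v
        have h2 : ‖δ‖ * ‖v‖ ≤ δbar * ‖v‖ :=
          mul_le_mul_of_nonneg_right hδnorm (norm_nonneg v)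
        nlinarith [norm_nonneg xt]
    
  have h1 : ⟪xt, F⟫ ≤ ‖xt‖ * ‖F‖ := real_inner_le_norm _ _
  have h3 : ⟪xt, δ u⟫ ≤ ‖xt‖ * (δbar * (c * κ)) := by
    have := hδv u; rwa [hunorm] at this
  have h4 : ⟪A, w⟫ ≤ ‖A‖ * ‖w‖ := real_inner_le_norm _ _
  have h5 : ⟪xt, δ w⟫ ≤ ‖xt‖ * (δbar * ‖w‖) := hδv w
  -- expand the left side
  have hexp : ⟪(‖xt‖)⁻¹ • xt, F + (g + δ) (u + w)⟫
      = ‖xt‖⁻¹ * (⟪xt, F⟫ + (⟪A, u⟫ + ⟪xt, δ u⟫ + (⟪A, w⟫ + ⟪xt, δ w⟫))) := by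
    rw [real_inner_smul_left]
    congr 1
    have : (g + δ) (u + w) = g u + δ u + (g w + δ w) := by
      simp only [ContinuousLinearMap.add_apply, map_add]
    rw [this]
    simp only [inner_add_right]
    rw [hadj u, hadj w]
  rw [hexp, div_eq_mul_inv, mul_comm ‖A‖ (‖xt‖)⁻¹, mul_assoc]
  apply mul_le_mul_of_nonneg_left _ (by positivity)
  -- key bound
  have hxa : ‖xt‖ ≤ ‖A‖ / gbar := (le_div_iff₀ hg0).mpr (by linarith)
  have t1 : ‖xt‖ * ‖F‖ ≤ ‖A‖ / gbar * ‖F‖ :=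
    mul_le_mul_of_nonneg_right hxa (norm_nonneg F)
  have t3 : ‖xt‖ * (δbar * (c * κ)) ≤ ‖A‖ / gbar * (δbar * (c * κ)) :=
    mul_le_mul_of_nonneg_right hxa (by positivity)
  have t5 : ‖xt‖ * (δbar * ‖w‖) ≤ ‖A‖ / gbar * (δbar * ‖w‖) :=
    mul_le_mul_of_nonneg_right hxa (by positivity)
  have key : -(c * κ) * ‖A‖ + ‖A‖ / gbar * (δbar * (c * κ)) = -κ * ‖A‖ := by
    rw [hc]; field_simp; ring
  have rhs : ‖A‖ * (-κ + (gbar + δbar) / gbar * ‖w‖ + ‖F‖ / gbar)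
      = -κ * ‖A‖ + ‖A‖ * ‖w‖ + ‖A‖ / gbar * (δbar * ‖w‖) + ‖A‖ / gbar * ‖F‖ := by
    field_simp; ring
  rw [rhs]
  linarith
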